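/- Let $\{V_n\}$ be a consistent sequence and let $\{C_n \subseteq V_n\}$ be a sequence of convex bodies (compact convex sets containing the origin in their interior). Then the sequence $\{C_n\}$ is intersection-compatible (i.e., $C_{n+1} \cap V_n = C_n$ for all $n$) if and only if the polar sequence $\{C_n^\circ\}$ is projection-compatible (i.e., $\mathcal{P}_{V_n} C_{n+1}^\circ = C_n^\circ$ for all $n$), where the polar is taken inside $V_n$. -/

import Mathlib

open Set Metric Pointwise

section aux

variable {H : Type*} [NormedAddCommGroup H] [InnerProductSpace ℝ H] [FiniteDimensional ℝ H]

private lemma inner_proj_eq (K : Submodule ℝ H) (x : H) {y : H} (hy : y ∈ K) :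
    inner (𝕜 := ℝ) ((Submodule.orthogonalProjection K x : H)) y = inner (𝕜 := ℝ) x y := by
  have h : x - Submodule.orthogonalProjection K x ∈ Kᗮ := Submodule.sub_starProjection_mem_orthogonal x
  have h0 : inner (𝕜 := ℝ) y (x - (Submodule.orthogonalProjection K x : H)) = 0 :=
    (Submodule.mem_orthogonal K _).mp h y hy
  have h1 : inner (𝕜 := ℝ) (x - (Submodule.orthogonalProjection K x : H)) y = 0 := by
    rw [real_inner_comm]; exact h0
  rw [inner_sub_left] at h1
  linarith

private lemma sep_exists {K : Set H} (hK : Convex ℝ K) (hcl : IsClosed K) (h0 : (0 : H) ∈ K)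
    {y : H} (hy : y ∉ K) :
    ∃ x : H, (∀ c ∈ K, inner (𝕜 := ℝ) x c ≤ 1) ∧ 1 < inner (𝕜 := ℝ) x y := by
  obtain ⟨f, u, hfK, hfy⟩ := geometric_hahn_banach_closed_point hK hcl hy
  have hu : 0 < u := by simpa using hfK 0 h0
  refine ⟨u⁻¹ • (InnerProductSpace.toDual ℝ H).symm f, fun c hc => ?_, ?_⟩
  · rw [real_inner_smul_left, InnerProductSpace.toDual_symm_apply]
    calc u⁻¹ * f c ≤ u⁻¹ * u :=
          mul_le_mul_of_nonneg_left (hfK c hc).le (inv_nonneg.mpr hu.le)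
      _ = 1 := inv_mul_cancel₀ hu.ne'
  · rw [real_inner_smul_left, InnerProductSpace.toDual_symm_apply]
    calc (1 : ℝ) = u⁻¹ * u := (inv_mul_cancel₀ hu.ne').symm
      _ < u⁻¹ * f y := mul_lt_mul_of_pos_left hfy (inv_pos.mpr hu)

private lemma exists_polar_preimage (V₀ V₁ : Submodule ℝ H) (hV : V₀ ≤ V₁)
    (C₀ C₁ : Set H) (hC₁V : C₁ ⊆ (V₁ : Set H)) (hconv₁ : Convex ℝ C₁)
    (hball : ∃ ε > 0, ∀ v : V₁, ‖v‖ < ε → (v : H) ∈ C₁)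
    (hI : C₁ ∩ (V₀ : Set H) = C₀)
    {z : H} (hz : z ∈ V₀) (hzp : ∀ y ∈ C₀, inner (𝕜 := ℝ) z y ≤ 1) :
    ∃ x : H, (x ∈ V₁ ∧ ∀ y ∈ C₁, inner (𝕜 := ℝ) x y ≤ 1) ∧
      (Submodule.orthogonalProjection V₀ x : H) = z := by
  obtain ⟨ε, hε, hballC⟩ := hball
  set D : Set H := C₁ + (V₁ᗮ : Set H) with hD
  have h0C₁ : (0 : H) ∈ C₁ := by
    have := hballC 0 (by simpa using hε); simpa using this
  have hDconv : Convex ℝ D := hconv₁.add (V₁ᗮ).convex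
  have hballD : ball (0 : H) ε ⊆ D := by
    intro x hx
    have hnorm : ‖(Submodule.orthogonalProjection V₁ x : H)‖ ≤ ‖x‖ := by
      calc ‖(Submodule.orthogonalProjection V₁ x : H)‖ = ‖Submodule.orthogonalProjection V₁ x‖ := rfl
        _ ≤ ‖Submodule.orthogonalProjection V₁‖ * ‖x‖ := (Submodule.orthogonalProjection V₁).le_opNorm x
        _ ≤ 1 * ‖x‖ := by
            exact mul_le_mul_of_nonneg_right (Submodule.orthogonalProjectionOnto_norm_le V₁) (norm_nonneg x)
        _ = ‖x‖ := one_mul _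
    have hxε : ‖x‖ < ε := by simpa [mem_ball_zero_iff] using hx
    refine ⟨(Submodule.orthogonalProjection V₁ x : H), hballC _ (lt_of_le_of_lt hnorm hxε),
      x - (Submodule.orthogonalProjection V₁ x : H), Submodule.sub_starProjection_mem_orthogonal x, ?_⟩
    show (Submodule.orthogonalProjection V₁ x : H) + (x - (Submodule.orthogonalProjection V₁ x : H)) = x
    abel
  have hDabs : Absorbent ℝ D := (absorbent_ball_zero hε).mono hballD
  -- the partial linear functional ⟪z, ·⟫ on V₀
  set f : H →ₗ.[ℝ] ℝ := ((innerSL ℝ z).toLinearMap).toPMap V₀ with hf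
  have hfdom : f.domain = V₀ := rfl
  have hfap : ∀ x : f.domain, f x = inner (𝕜 := ℝ) z (x : H) := fun x => rfl
  have hfle : ∀ x : f.domain, f x ≤ gauge D (x : H) := by
    intro x
    rw [hfap]
    -- bound by all elements of the defining set
    have hSne : { r : ℝ | 0 < r ∧ (x : H) ∈ r • D }.Nonempty := by
      refine ⟨‖(x : H)‖ / ε + 1, by positivity, ?_⟩
      have hr : (0 : ℝ) < ‖(x : H)‖ / ε + 1 := by positivity
      have hmem : (‖(x : H)‖ / ε + 1)⁻¹ • (x : H) ∈ ball (0 : H) ε := by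
        rw [mem_ball_zero_iff, norm_smul, norm_inv, Real.norm_eq_abs, abs_of_pos hr,
          inv_mul_lt_iff₀ hr]
        have h1 : ‖(x : H)‖ / ε * ε = ‖(x : H)‖ := div_mul_cancel₀ _ (ne_of_gt hε)
        rw [add_mul, one_mul, h1]
        linarith
      refine ⟨_, hballD hmem, ?_⟩
      show (‖(x : H)‖ / ε + 1) • (‖(x : H)‖ / ε + 1)⁻¹ • (x : H) = (x : H)
      rw [smul_inv_smul₀ (ne_of_gt hr)]
    refine le_csInf hSne ?_
    rintro b ⟨hb, hbmem⟩
    obtain ⟨d, hd, hdx0⟩ := hbmem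
    obtain ⟨c, hc, w, hw, rfl⟩ := hd
    have hdx : b • (c + w) = (x : H) := hdx0
    -- w must vanish since b • w ∈ V₁ ∩ V₁ᗮ
    have hxV₀ : (x : H) ∈ V₀ := x.2
    have hbw : b • w ∈ V₁ := by
      have : b • w = (x : H) - b • c := by
        rw [← hdx, smul_add]; abel
      rw [this]
      exact Submodule.sub_mem _ (hV hxV₀) (Submodule.smul_mem _ _ (hC₁V hc))
    have hbw' : b • w ∈ V₁ᗮ := Submodule.smul_mem _ _ hw
    have hbw0 : b • w = 0 := by
      have h := (Submodule.mem_orthogonal V₁ (b • w)).mp hbw' (b • w) hbw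
      exact inner_self_eq_zero.mp h
    have hw0 : w = 0 := by
      rcases smul_eq_zero.mp hbw0 with h | h
      · exact absurd h (ne_of_gt hb)
      · exact h
    subst hw0
    rw [add_zero] at hdx
    clear hdx0
    -- c ∈ C₀
    have hcV₀ : c ∈ V₀ := by
      have : c = b⁻¹ • (x : H) := by
        rw [← hdx, inv_smul_smul₀ (ne_of_gt hb)]
      rw [this]
      exact Submodule.smul_mem _ _ hxV₀
    have hcC₀ : c ∈ C₀ := by rw [← hI]; exact ⟨hc, hcV₀⟩
    calc inner (𝕜 := ℝ) z (x : H) = inner (𝕜 := ℝ) z (b • c) := by rw [hdx]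
      _ = b * inner (𝕜 := ℝ) z c := real_inner_smul_right z c b
      _ ≤ b * 1 := mul_le_mul_of_nonneg_left (hzp c hcC₀) hb.le
      _ = b := mul_one b
  obtain ⟨g, hg_eq, hg_le⟩ := exists_extension_of_le_sublinear f (gauge D)
    (fun c hc x => by rw [gauge_smul_of_nonneg hc.le, smul_eq_mul])
    (gauge_add_le hDconv hDabs) hfle
  set x₀ : H := (InnerProductSpace.toDual ℝ H).symm (LinearMap.toContinuousLinearMap g) with hx₀
  have hx₀ap : ∀ y : H, inner (𝕜 := ℝ) x₀ y = g y := fun y => by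
    rw [hx₀, InnerProductSpace.toDual_symm_apply]; rfl
  -- g vanishes on V₁ᗮ
  have hgauge0 : ∀ w ∈ V₁ᗮ, gauge D w ≤ 0 := by
    intro w hw
    have hle : ∀ r : ℝ, 0 < r → gauge D w ≤ r := by
      intro r hr
      refine gauge_le_of_mem hr.le ?_
      refine ⟨r⁻¹ • w, ⟨0, h0C₁, r⁻¹ • w, Submodule.smul_mem _ _ hw, zero_add _⟩, ?_⟩
      show r • r⁻¹ • w = w
      rw [smul_inv_smul₀ (ne_of_gt hr)]
    by_contra hcon
    push_neg at hcon
    have := hle (gauge D w / 2) (by linarith)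
    linarith
  have hg0 : ∀ w ∈ V₁ᗮ, g w = 0 := by
    intro w hw
    have h1 : g w ≤ 0 := (hg_le w).trans (hgauge0 w hw)
    have h2 : g (-w) ≤ 0 := (hg_le (-w)).trans (hgauge0 (-w) (Submodule.neg_mem _ hw))
    rw [map_neg] at h2
    linarith
  have hx₀V₁ : x₀ ∈ V₁ := by
    rw [← Submodule.orthogonal_orthogonal V₁]
    rw [Submodule.mem_orthogonal]
    intro u hu
    rw [real_inner_comm, hx₀ap]
    exact hg0 u hu
  have hx₀pol : ∀ y ∈ C₁, inner (𝕜 := ℝ) x₀ y ≤ 1 := by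
    intro y hy
    rw [hx₀ap]
    exact (hg_le y).trans (gauge_le_one_of_mem ⟨y, hy, 0, Submodule.zero_mem _, add_zero y⟩)
  have hsub : x₀ - z ∈ V₀ᗮ := by
    rw [Submodule.mem_orthogonal']
    intro u hu
    rw [inner_sub_left, hx₀ap]
    have := hg_eq ⟨u, hu⟩
    rw [hfap] at this
    rw [this]
    simp
  refine ⟨x₀, ⟨hx₀V₁, hx₀pol⟩, ?_⟩
  have hdecomp : Submodule.orthogonalProjection V₀ x₀ =
      Submodule.orthogonalProjection V₀ z + Submodule.orthogonalProjection V₀ (x₀ - z) := by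
    rw [← map_add]
    congr 1
    abel
  rw [hdecomp]
  push_cast
  rw [Submodule.orthogonalProjectionOnto_apply_of_mem_orthogonal hsub, ← Submodule.starProjection_apply,
    Submodule.starProjection_eq_self_iff.mpr hz]
  simp

end aux

/-- For a sequence of convex bodies `C n ⊆ V n` in a consistent sequence
of nested finite-dimensional inner product spaces, intersection compatibility of `{C n}`
(`C (n+1) ∩ V n = C n`) is equivalent to projection compatibility of the polar sequence
(`𝒫_{V n} '' (C (n+1))° = (C n)°`), polars being taken inside `V n`. -/
theorem polar_duality_intersection_projection
    {H : Type*} [NormedAddCommGroup H] [InnerProductSpace ℝ H] [FiniteDimensional ℝ H]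
    (V : ℕ → Submodule ℝ H) (hV : ∀ n, V n ≤ V (n + 1))
    (C : ℕ → Set H) (hCV : ∀ n, C n ⊆ (V n : Set H))
    (hconv : ∀ n, Convex ℝ (C n)) (hcpt : ∀ n, IsCompact (C n))
    (h0 : ∀ n, (0 : V n) ∈ interior (((↑) : V n → H) ⁻¹' C n)) :
    (∀ n, C (n + 1) ∩ (V n : Set H) = C n) ↔
      (∀ n, (fun x : H => (Submodule.orthogonalProjection (V n) x : H)) ''
          {x : H | x ∈ V (n + 1) ∧ ∀ y ∈ C (n + 1), inner (𝕜 := ℝ) x y ≤ 1} =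
        {x : H | x ∈ V n ∧ ∀ y ∈ C n, inner (𝕜 := ℝ) x y ≤ 1}) := by
  have hball : ∀ n, ∃ ε > 0, ∀ v : V n, ‖v‖ < ε → (v : H) ∈ C n := by
    intro n
    obtain ⟨ε, hε, hsub⟩ := Metric.mem_nhds_iff.mp (mem_interior_iff_mem_nhds.mp (h0 n))
    exact ⟨ε, hε, fun v hv => hsub (by simpa [mem_ball_zero_iff] using hv)⟩
  have h0C : ∀ n, (0 : H) ∈ C n := by
    intro n
    obtain ⟨ε, hε, hb⟩ := hball n
    have := hb 0 (by simpa using hε)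
    simpa using this
  constructor
  · intro hI n
    ext z
    constructor
    · rintro ⟨x, ⟨hxV, hxp⟩, rfl⟩
      refine ⟨SetLike.coe_mem _, fun y hy => ?_⟩
      have hyV : y ∈ V n := hCV n hy
      have hyC : y ∈ C (n + 1) := by
        rw [← hI n] at hy; exact hy.1
      rw [inner_proj_eq _ _ hyV]
      exact hxp y hyC
    · rintro ⟨hzV, hzp⟩
      obtain ⟨x, hx, hproj⟩ := exists_polar_preimage (V n) (V (n + 1)) (hV n)
        (C n) (C (n + 1)) (hCV (n + 1)) (hconv (n + 1)) (hball (n + 1)) (hI n) hzV hzp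
      exact ⟨x, hx, hproj⟩
  · intro hP n
    ext y
    constructor
    · rintro ⟨hyC, hyV⟩
      by_contra hyn
      obtain ⟨x, hxp, hxy⟩ := sep_exists (hconv n) (hcpt n).isClosed (h0C n) hyn
      set x' : H := (Submodule.orthogonalProjection (V n) x : H) with hx'
      have hx'P : x' ∈ {x : H | x ∈ V n ∧ ∀ y ∈ C n, inner (𝕜 := ℝ) x y ≤ 1} := by
        refine ⟨SetLike.coe_mem _, fun c hc => ?_⟩
        rw [hx', inner_proj_eq _ _ (hCV n hc)]
        exact hxp c hc
      rw [← hP n] at hx'P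
      obtain ⟨u, ⟨huV, hup⟩, huproj0⟩ := hx'P
      have huproj : (Submodule.orthogonalProjection (V n) u : H) = x' := huproj0
      have h1 : inner (𝕜 := ℝ) u y ≤ 1 := hup y hyC
      have h2 : inner (𝕜 := ℝ) u y = inner (𝕜 := ℝ) x y := by
        rw [← inner_proj_eq (V n) u hyV, huproj, hx', inner_proj_eq _ _ hyV]
      linarith
    · intro hyC
      have hyV : y ∈ V n := hCV n hyC
      refine ⟨?_, hyV⟩
      by_contra hyn
      obtain ⟨x, hxp, hxy⟩ := sep_exists (hconv (n + 1)) (hcpt (n + 1)).isClosed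
        (h0C (n + 1)) hyn
      set x' : H := (Submodule.orthogonalProjection (V (n + 1)) x : H) with hx'
      have hx'P : x' ∈ {x : H | x ∈ V (n + 1) ∧ ∀ c ∈ C (n + 1), inner (𝕜 := ℝ) x c ≤ 1} := by
        refine ⟨SetLike.coe_mem _, fun c hc => ?_⟩
        rw [hx', inner_proj_eq _ _ (hCV (n + 1) hc)]
        exact hxp c hc
      have himg : (Submodule.orthogonalProjection (V n) x' : H) ∈
          {z : H | z ∈ V n ∧ ∀ c ∈ C n, inner (𝕜 := ℝ) z c ≤ 1} := by
        rw [← hP n]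
        exact ⟨x', hx'P, rfl⟩
      have h1 : inner (𝕜 := ℝ) ((Submodule.orthogonalProjection (V n) x' : H)) y ≤ 1 :=
        himg.2 y hyC
      have h2 : inner (𝕜 := ℝ) ((Submodule.orthogonalProjection (V n) x' : H)) y
          = inner (𝕜 := ℝ) x y := by
        rw [inner_proj_eq _ _ hyV, hx', inner_proj_eq _ _ (hV _ hyV)]
      linarith
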